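/- Fix an integer t ≥ 1 and define the polynomial sequences P_0(r), P_1(r) ∈ ℝ[p] as in the context. Then for every r ≥ 1: −2·2^t ≤ [p]P_0(r) ≤ 0 and −2·2^t ≤ [p]P_1(r) ≤ 0. -/

import Mathlib

/-! ## Decision trees -/

/-- Binary decision trees over a variable index type `ι`.  An internal vertex
`node i t0 t1` queries variable `i`; the `0`-edge leads to `t0`, the `1`-edge to `t1`. -/
inductive DTree (ι : Type) : Type where
  | leaf : Bool → DTree ι
  | node : ι → DTree ι → DTree ι → DTree ι

namespace DTree

variable {ι : Type}

/-- Evaluate a decision tree on an input. -/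
def eval : DTree ι → (ι → Bool) → Bool
  | leaf b, _ => b
  | node i t0 t1, x => if x i then t1.eval x else t0.eval x

/-- Depth: the number of edges on the longest root-to-leaf path. -/
def depth : DTree ι → ℕ
  | leaf _ => 0
  | node _ t0 t1 => max t0.depth t1.depth + 1

/-- Distance from the root to the closest leaf. -/
def minLeafDepth : DTree ι → ℕ
  | leaf _ => 0
  | node _ t0 t1 => min t0.minLeafDepth t1.minLeafDepth + 1

/-- A tree is `t`-clipped if every vertex is within distance `t` of some leaf. -/
def Clipped (t : ℕ) : DTree ι → Prop
  | leaf _ => True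
  | node _ t0 t1 =>
      min t0.minLeafDepth t1.minLeafDepth + 1 ≤ t ∧ Clipped t t0 ∧ Clipped t t1

/-- No variable in `seen` (nor any variable already queried above) is queried again:
this captures "no variable appears more than once on any root-to-leaf path". -/
def ReadOnceFrom : List ι → DTree ι → Prop
  | _, leaf _ => True
  | seen, node i t0 t1 =>
      i ∉ seen ∧ ReadOnceFrom (i :: seen) t0 ∧ ReadOnceFrom (i :: seen) t1

/-- No variable appears more than once on any root-to-leaf path. -/
def ReadOnce (T : DTree ι) : Prop := T.ReadOnceFrom []

/-- `T` computes the boolean function `f`. -/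
def Computes (T : DTree ι) (f : (ι → Bool) → Bool) : Prop := ∀ x, T.eval x = f x

/-- The list of all variables labelling internal vertices of the tree. -/
def nodeVars : DTree ι → List ι
  | leaf _ => []
  | node i t0 t1 => i :: (t0.nodeVars ++ t1.nodeVars)

/-- The tree has some leaf labelled `b`. -/
def HasLeaf (b : Bool) : DTree ι → Prop
  | leaf c => c = b
  | node _ t0 t1 => HasLeaf b t0 ∨ HasLeaf b t1

/-- From every internal vertex there is a path to a leaf labelled 0 (`false`)
and a path to a leaf labelled 1 (`true`). -/
def EverySplit : DTree ι → Prop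
  | leaf _ => True
  | node _ t0 t1 =>
      (HasLeaf true t0 ∨ HasLeaf true t1) ∧ (HasLeaf false t0 ∨ HasLeaf false t1) ∧
        EverySplit t0 ∧ EverySplit t1

/-- Variable `y` labels some internal vertex at distance `d` (edges) from the root. -/
def OccursAt (y : ι) : ℕ → DTree ι → Prop
  | _, leaf _ => False
  | 0, node i _ _ => i = y
  | d + 1, node _ t0 t1 => OccursAt y d t0 ∨ OccursAt y d t1

end DTree

/-- `DTdepth f` is the minimum depth of a decision tree computing `f`. -/
noncomputable def DTdepth {ι : Type} (f : (ι → Bool) → Bool) : ℕ :=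
  sInf {d | ∃ T : DTree ι, T.ReadOnce ∧ T.Computes f ∧ T.depth ≤ d}

/-! ## Restrictions -/

/-- The function obtained by fixing each variable `i` with `ρ i = some b` to `b`
(variables with `ρ i = none`, i.e. assigned `*`, are left free). -/
def restrictFun {ι : Type} (f : (ι → Bool) → Bool) (ρ : ι → Option Bool) :
    (ι → Bool) → Bool :=
  fun x => f (fun i => (ρ i).getD (x i))

open Classical in
/-- The probability of the event `E` under a random `p`-restriction: each variable
independently gets `*` (i.e. `none`) with probability `p`, and each of the values
`0`, `1` with probability `(1-p)/2`. -/
noncomputable def restrProb {ι : Type} [Fintype ι] [DecidableEq ι] (p : ℝ)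
    (E : (ι → Option Bool) → Prop) : ℝ :=
  ∑ ρ : ι → Option Bool,
    (if E ρ then ∏ i : ι, (if ρ i = none then p else (1 - p) / 2) else 0)

/-! ## Tree tribes -/

/-- The variable index type of the complete `t`-clipped tree `W_t(r)` on `r` levels:
the first block `v_1, …, v_t`, plus, for each `k < t`, a fresh copy of the variables
of `W_t(r-1)` hanging off the 1-edge of `v_{k+1}`. -/
def XiVars (t : ℕ) : ℕ → Type
  | 0 => Empty
  | r + 1 => Fin t ⊕ (Fin t × XiVars t r)

instance XiVars.instFintype (t : ℕ) : ∀ r, Fintype (XiVars t r)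
  | 0 => inferInstanceAs (Fintype Empty)
  | r + 1 =>
      letI := XiVars.instFintype t r
      inferInstanceAs (Fintype (Fin t ⊕ (Fin t × XiVars t r)))

instance XiVars.instDecidableEq (t : ℕ) : ∀ r, DecidableEq (XiVars t r)
  | 0 => inferInstanceAs (DecidableEq Empty)
  | r + 1 =>
      letI := XiVars.instDecidableEq t r
      inferInstanceAs (DecidableEq (Fin t ⊕ (Fin t × XiVars t r)))

/-- The `t`-clipped xor tree tribe `Ξ_t(r)`: the function computed by `W_t(r)` with
each leaf labelled by the parity of the edge labels on its root-to-leaf path.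
Following the 0-edges `v_1 → v_2 → ⋯` until the first variable with value 1 (if any),
whose 1-edge leads to a fresh copy computing the negation of `Ξ_t(r-1)`. -/
def Xi (t : ℕ) : ∀ r, (XiVars t r → Bool) → Bool
  | 0, _ => false
  | r + 1, x =>
      match (List.finRange t).find? (fun i => x (Sum.inl i)) with
      | none => false
      | some k => ! Xi t r (fun v => x (Sum.inr (k, v)))

namespace XiVars

/-- The list of 1-branch positions (0-indexed within each block) taken on the path
from the root to the block containing the given variable. -/
def branches {t : ℕ} : ∀ {r : ℕ}, XiVars t r → List (Fin t)
  | 0, v => nomatch v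
  | _ + 1, Sum.inl _ => []
  | _ + 1, Sum.inr (k, w) => k :: branches w

/-- The (0-indexed) position of the variable within its block. -/
def pos {t : ℕ} : ∀ {r : ℕ}, XiVars t r → Fin t
  | 0, v => nomatch v
  | _ + 1, Sum.inl i => i
  | _ + 1, Sum.inr (_, w) => pos w

/-- The level of a variable: the recursive step at which it was added (level 1 is the
outermost block). -/
def level {t r : ℕ} (v : XiVars t r) : ℕ := (branches v).length + 1

/-- The distance (number of edges) from the root of `W_t(r)` to the vertex of `v`. -/
def rootDist {t r : ℕ} (v : XiVars t r) : ℕ :=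
  ((branches v).map (fun b => (b : ℕ) + 1)).sum + (pos v : ℕ)

/-- The distance from the vertex of `v` to the closest leaf of `W_t(r)`. -/
def leafDist {t r : ℕ} (v : XiVars t r) : ℕ :=
  min (t - (pos v : ℕ)) (1 + min t (r - level v))

/-- A root-to-leaf path of `W_t(r)` is determined by the list `L` of 1-branch positions
it takes (with `L.length ≤ r`); `v.onPath L` says the vertex of `v` lies on that path. -/
def onPath {t r : ℕ} (v : XiVars t r) (L : List (Fin t)) : Prop :=
  branches v = L ∨
    (branches v <+: L ∧ branches v ≠ L ∧
      ∃ b : Fin t, L[(branches v).length]? = some b ∧ pos v ≤ b)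

end XiVars

/-- For `t = 1`, `Ξ_1(n)` is computed by a path on `n` variables: vertex `x_i` has a
0-edge to a leaf and a 1-edge to `x_{i+1}`, leaves labelled by the parity of the edge
labels from the root. -/
def Xi1 : ∀ n, (Fin n → Bool) → Bool
  | 0, _ => false
  | n + 1, x => if x 0 then ! Xi1 n (fun i => x i.succ) else false

/-! ## Fourier coefficients -/

/-- The Fourier coefficient `f̂_S` of a boolean function, viewed as a function
`{−1,1}^n → {−1,1}` via the identification `false ↔ +1`, `true ↔ −1`:
`f̂_S = E_x[f(x) ∏_{i ∈ S} x_i]` over a uniformly random input. -/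
noncomputable def fourierCoeffB {ι : Type} [Fintype ι] [DecidableEq ι]
    (f : (ι → Bool) → Bool) (S : Finset ι) : ℝ :=
  (∑ x : ι → Bool,
      (if f x then (-1 : ℝ) else 1) * ∏ i ∈ S, (if x i then (-1 : ℝ) else 1)) /
    2 ^ Fintype.card ι

/-- The `i`-th Jacobsthal number `J_i = (2^i − (−1)^i)/3`, as a real number. -/
noncomputable def jacobsthal (i : ℕ) : ℝ := (2 ^ i - (-1) ^ i) / 3

/-- The parity (mod-2 sum) of all the bits of `x`. -/
def parityBool {ι : Type} [Fintype ι] [DecidableEq ι] (x : ι → Bool) : Bool :=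
  decide ((Finset.univ.filter fun i => x i = true).card % 2 = 1)

/-! ## The probabilities `P_0(r)`, `P_1(r)` and `γ_d(r)` -/

/-- `P_0(r)`: the probability that `Ξ_t(r)` restricted by a random `p`-restriction is
the identically-`0` function. -/
noncomputable def Pzero (t : ℕ) (p : ℝ) (r : ℕ) : ℝ :=
  restrProb p (fun ρ : XiVars t r → Option Bool => ∀ x, restrictFun (Xi t r) ρ x = false)

/-- `P_1(r)`: the probability that `Ξ_t(r)` restricted by a random `p`-restriction is
the identically-`1` function. -/
noncomputable def Pone (t : ℕ) (p : ℝ) (r : ℕ) : ℝ :=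
  restrProb p (fun ρ : XiVars t r → Option Bool => ∀ x, restrictFun (Xi t r) ρ x = true)

/-- `γ_d(r) = Pr_ρ[DT_depth(Ξ_t(r)|_ρ) ≥ d]` for a random `p`-restriction `ρ`. -/
noncomputable def gammaDT (t : ℕ) (p : ℝ) (d r : ℕ) : ℝ :=
  restrProb p (fun ρ : XiVars t r → Option Bool => d ≤ DTdepth (restrictFun (Xi t r) ρ))

/-! ## The polynomial sequences `P_0(r), P_1(r) ∈ ℝ[p]` -/

/-- The polynomial `q = (1 − p)/2 ∈ ℝ[p]`. -/
noncomputable def qP : Polynomial ℝ := Polynomial.C (1 / 2) * (1 - Polynomial.X)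

/-- The pair of polynomials `(P_0(r), P_1(r)) ∈ ℝ[p] × ℝ[p]`, defined by
`P_0(1) = q^t`, `P_1(1) = 1 − (1−q)^t`, and for `r ≥ 2`, with `U = P_1(r−1)` and
`V = P_0(r−1)`: `P_0(r) = q·U·∑_{k=0}^{t−1}(q+pU)^k + (q+pU)^t` and
`P_1(r) = q·V·∑_{k=0}^{t−1}(q+pV)^k`.  (The value at `r = 0` is junk.) -/
noncomputable def PP (t : ℕ) : ℕ → Polynomial ℝ × Polynomial ℝ
  | 0 => (1, 0)
  | 1 => (qP ^ t, 1 - (1 - qP) ^ t)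
  | r + 2 =>
      (qP * (PP t (r + 1)).2 *
          (∑ k ∈ Finset.range t, (qP + Polynomial.X * (PP t (r + 1)).2) ^ k) +
        (qP + Polynomial.X * (PP t (r + 1)).2) ^ t,
       qP * (PP t (r + 1)).1 *
          (∑ k ∈ Finset.range t, (qP + Polynomial.X * (PP t (r + 1)).1) ^ k))

/-- The polynomial `P_0(r) ∈ ℝ[p]`. -/
noncomputable def P0poly (t r : ℕ) : Polynomial ℝ := (PP t r).1

/-- The polynomial `P_1(r) ∈ ℝ[p]`. -/
noncomputable def P1poly (t r : ℕ) : Polynomial ℝ := (PP t r).2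


/-! ### Auxiliary machinery for Statement 14 -/

namespace PpolyAux

open Polynomial Finset

/-- `Ev P` is the constant coefficient of `P`. -/
noncomputable def Ev (P : Polynomial ℝ) : ℝ := P.eval 0

/-- `Dv P` is the linear coefficient of `P`. -/
noncomputable def Dv (P : Polynomial ℝ) : ℝ := (Polynomial.derivative P).eval 0

lemma coeff_one_eq_Dv (P : Polynomial ℝ) : P.coeff 1 = Dv P := by
  have h := Polynomial.coeff_derivative P 0
  rw [Dv, ← Polynomial.coeff_zero_eq_eval_zero, h]
  norm_num

lemma Ev_mul (P Q : Polynomial ℝ) : Ev (P * Q) = Ev P * Ev Q := by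
  simp [Ev]

lemma Ev_add (P Q : Polynomial ℝ) : Ev (P + Q) = Ev P + Ev Q := by
  simp [Ev]

lemma Ev_pow (P : Polynomial ℝ) (n : ℕ) : Ev (P ^ n) = (Ev P) ^ n := by
  simp [Ev]

lemma Dv_mul (P Q : Polynomial ℝ) : Dv (P * Q) = Dv P * Ev Q + Ev P * Dv Q := by
  simp [Dv, Ev, Polynomial.derivative_mul]

lemma Dv_add (P Q : Polynomial ℝ) : Dv (P + Q) = Dv P + Dv Q := by
  simp [Dv]

lemma Dv_pow (P : Polynomial ℝ) (n : ℕ) :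
    Dv (P ^ n) = n * (Ev P) ^ (n - 1) * Dv P := by
  simp [Dv, Ev, Polynomial.derivative_pow]

lemma Ev_qP : Ev qP = 1 / 2 := by simp [Ev, qP]

lemma Dv_qP : Dv qP = -(1 / 2) := by simp [Dv, qP]

lemma Ev_geom (W : Polynomial ℝ) (t : ℕ) :
    Ev (∑ k ∈ range t, W ^ k) = ∑ k ∈ range t, (Ev W) ^ k := by
  simp [Ev, Polynomial.eval_finset_sum]

lemma Dv_geom (W : Polynomial ℝ) (t : ℕ) :
    Dv (∑ k ∈ range t, W ^ k)
      = (∑ k ∈ range t, (k : ℝ) * (Ev W) ^ (k - 1)) * Dv W := by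
  rw [Dv, map_sum, Polynomial.eval_finset_sum, Finset.sum_mul]
  refine Finset.sum_congr rfl fun k _ => ?_
  have := Dv_pow W k
  simpa [Dv, Ev] using this

lemma EvW (U : Polynomial ℝ) : Ev (qP + Polynomial.X * U) = 1 / 2 := by
  simp [Ev, qP]

lemma DvW (U : Polynomial ℝ) : Dv (qP + Polynomial.X * U) = -(1 / 2) + Ev U := by
  simp [Dv, Ev, qP, Polynomial.derivative_mul]

lemma sum_half (t : ℕ) :
    ∑ k ∈ range t, ((1 : ℝ) / 2) ^ k = 2 - 2 * ((1 : ℝ) / 2) ^ t := by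
  induction t with
  | zero => simp
  | succ t ih => rw [Finset.sum_range_succ, ih, pow_succ]; ring

lemma term_khalf (k : ℕ) :
    (k : ℝ) * ((1 : ℝ) / 2) ^ (k - 1) = 2 * k * ((1 : ℝ) / 2) ^ k := by
  cases k with
  | zero => simp
  | succ k => rw [Nat.succ_sub_one, pow_succ]; ring

lemma sum_khalf (t : ℕ) :
    ∑ k ∈ range t, (k : ℝ) * ((1 : ℝ) / 2) ^ (k - 1)
      = 4 - 4 * (t + 1) * ((1 : ℝ) / 2) ^ t := by
  induction t with
  | zero => norm_num
  | succ t ih =>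
      rw [Finset.sum_range_succ, ih, term_khalf, pow_succ]
      push_cast
      ring

lemma tE_le_one (t : ℕ) : ((t : ℝ) + 1) * ((1 : ℝ) / 2) ^ t ≤ 1 := by
  have h : (t + 1 : ℕ) ≤ 2 ^ t := Nat.lt_two_pow_self (n := t)
  have h2 : ((t : ℝ) + 1) ≤ 2 ^ t := by exact_mod_cast h
  have h3 : (0 : ℝ) < 2 ^ t := by positivity
  rw [div_pow, one_pow, mul_one_div, div_le_one h3]
  exact h2

/-- Key inequality for the `P₁` recursion step. -/
lemma key1 (T E B a u : ℝ) (hE : 0 < E) (hE2 : 2 * E ≤ 1) (hT : 0 ≤ T)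
    (hTE : (T + 1) * E ≤ 1) (hBE : B * E = 2)
    (ha0 : 0 ≤ a) (ha1 : a ≤ 1) (hu : u ≤ 0) (hB : -B ≤ u) :
    -B ≤ (-(a) / 2 + u / 2) * (2 - 2 * E)
        + a / 2 * (4 - 4 * (T + 1) * E) * (a - 1 / 2) ∧
      (-(a) / 2 + u / 2) * (2 - 2 * E)
        + a / 2 * (4 - 4 * (T + 1) * E) * (a - 1 / 2) ≤ 0 := by
  constructor
  · nlinarith [mul_nonneg (by linarith : (0:ℝ) ≤ B + u) (by linarith : (0:ℝ) ≤ 1 - E),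
      mul_nonneg ha0 (by linarith : (0:ℝ) ≤ 4 - 4 * (T + 1) * E),
      mul_nonneg (by linarith : (0:ℝ) ≤ 1 - a) (by linarith : (0:ℝ) ≤ 2 - 2 * E),
      mul_nonneg ha0 (by linarith : (0:ℝ) ≤ 2 - 2 * E),
      sq_nonneg (a - 1 / 4), mul_nonneg hT hE.le]
  · nlinarith [mul_nonneg (by linarith : (0:ℝ) ≤ -u) (by linarith : (0:ℝ) ≤ 2 - 2 * E),
      mul_nonneg ha0 (mul_nonneg (by linarith : (0:ℝ) ≤ 1 - a)
        (by linarith : (0:ℝ) ≤ 4 - 4 * (T + 1) * E)),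
      mul_nonneg ha0 (mul_nonneg hT hE.le)]

/-- Key inequality for the `P₀` recursion step. -/
lemma key0 (T E B b u : ℝ) (hE : 0 < E) (hE2 : 2 * E ≤ 1) (hT : 0 ≤ T)
    (hTE : (T + 1) * E ≤ 1) (hBE : B * E = 2)
    (hb0 : 0 ≤ b) (hb1 : b ≤ 1) (hu : u ≤ 0) (hB : -B ≤ u) :
    -B ≤ (-(b) / 2 + u / 2) * (2 - 2 * E)
        + b / 2 * (4 - 4 * (T + 1) * E) * (b - 1 / 2)
        + 2 * T * E * (b - 1 / 2) ∧
      (-(b) / 2 + u / 2) * (2 - 2 * E)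
        + b / 2 * (4 - 4 * (T + 1) * E) * (b - 1 / 2)
        + 2 * T * E * (b - 1 / 2) ≤ 0 := by
  have hfac : (-(b) / 2 + u / 2) * (2 - 2 * E)
        + b / 2 * (4 - 4 * (T + 1) * E) * (b - 1 / 2)
        + 2 * T * E * (b - 1 / 2)
      = u / 2 * (2 - 2 * E) + (b - 1) * (b * (2 - 2 * (T + 1) * E) + T * E) := by
    ring
  constructor
  · rw [hfac]
    nlinarith [mul_nonneg (by linarith : (0:ℝ) ≤ B + u) (by linarith : (0:ℝ) ≤ 1 - E),
      mul_nonneg (by linarith : (0:ℝ) ≤ 1 - b)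
        (mul_nonneg (by linarith : (0:ℝ) ≤ 1 - b)
          (by linarith : (0:ℝ) ≤ 2 - 2 * (T + 1) * E)),
      mul_nonneg hT hE.le,
      mul_nonneg (by linarith : (0:ℝ) ≤ 1 - b) (mul_nonneg hT hE.le)]
  · rw [hfac]
    nlinarith [mul_nonneg (by linarith : (0:ℝ) ≤ -u) (by linarith : (0:ℝ) ≤ 2 - 2 * E),
      mul_nonneg (by linarith : (0:ℝ) ≤ 1 - b)
        (mul_nonneg hb0 (by linarith : (0:ℝ) ≤ 2 - 2 * (T + 1) * E)),
      mul_nonneg (by linarith : (0:ℝ) ≤ 1 - b) (mul_nonneg hT hE.le)]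

lemma step_Ev1 (t : ℕ) (V : Polynomial ℝ) :
    Ev (qP * V * ∑ k ∈ range t, (qP + Polynomial.X * V) ^ k)
      = 1 / 2 * Ev V * (2 - 2 * ((1 : ℝ) / 2) ^ t) := by
  rw [Ev_mul, Ev_mul, Ev_qP, Ev_geom, EvW, sum_half]

lemma step_Dv1 (t : ℕ) (V : Polynomial ℝ) :
    Dv (qP * V * ∑ k ∈ range t, (qP + Polynomial.X * V) ^ k)
      = (-(Ev V) / 2 + Dv V / 2) * (2 - 2 * ((1 : ℝ) / 2) ^ t)
        + Ev V / 2 * (4 - 4 * ((t : ℝ) + 1) * ((1 : ℝ) / 2) ^ t) * (Ev V - 1 / 2) := by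
  rw [Dv_mul, Dv_mul, Dv_geom, Ev_mul, Ev_geom, Dv_qP, Ev_qP, DvW, EvW, sum_half, sum_khalf]
  ring

lemma step_Ev0pow (t : ℕ) (U : Polynomial ℝ) :
    Ev ((qP + Polynomial.X * U) ^ t) = ((1 : ℝ) / 2) ^ t := by
  rw [Ev_pow, EvW]

lemma step_Dv0pow (s : ℕ) (U : Polynomial ℝ) :
    Dv ((qP + Polynomial.X * U) ^ (s + 1))
      = 2 * ((s : ℝ) + 1) * ((1 : ℝ) / 2) ^ (s + 1) * (Ev U - 1 / 2) := by
  rw [Dv_pow, EvW, DvW, Nat.add_sub_cancel, pow_succ]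
  push_cast
  ring

set_option maxHeartbeats 2000000 in
/-- The main induction: constant coefficients are nonnegative and sum to `1`;
linear coefficients lie in `[-2·2^t, 0]`. -/
lemma main (s : ℕ) : ∀ r, 1 ≤ r →
    (Ev (PP (s + 1) r).1 + Ev (PP (s + 1) r).2 = 1 ∧
      0 ≤ Ev (PP (s + 1) r).1 ∧ 0 ≤ Ev (PP (s + 1) r).2) ∧
    (-(2 * 2 ^ (s + 1)) ≤ Dv (PP (s + 1) r).1 ∧ Dv (PP (s + 1) r).1 ≤ 0 ∧
      -(2 * 2 ^ (s + 1)) ≤ Dv (PP (s + 1) r).2 ∧ Dv (PP (s + 1) r).2 ≤ 0) := by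
  set t := s + 1 with ht
  have hE : (0 : ℝ) < ((1 : ℝ) / 2) ^ t := by positivity
  have hF : (0 : ℝ) < ((1 : ℝ) / 2) ^ s := by positivity
  have hF1 : ((1 : ℝ) / 2) ^ s ≤ 1 := by
    apply pow_le_one₀ <;> norm_num
  have hEF : ((1 : ℝ) / 2) ^ t = ((1 : ℝ) / 2) ^ s * (1 / 2) := pow_succ _ _
  have hE2 : 2 * ((1 : ℝ) / 2) ^ t ≤ 1 := by rw [hEF]; linarith
  have hTE : ((t : ℝ) + 1) * ((1 : ℝ) / 2) ^ t ≤ 1 := tE_le_one t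
  have hsE : ((s : ℝ) + 1) * ((1 : ℝ) / 2) ^ s ≤ 1 := tE_le_one s
  have h1 : ((1 : ℝ) / 2) ^ t * (2 : ℝ) ^ t = 1 := by
    rw [← mul_pow]; norm_num
  have hBE : (2 * (2 : ℝ) ^ t) * ((1 : ℝ) / 2) ^ t = 2 := by
    linear_combination 2 * h1
  have hB4 : (4 : ℝ) ≤ 2 * (2 : ℝ) ^ t := by
    have : (2 : ℝ) ≤ 2 ^ t := by
      calc (2 : ℝ) = 2 ^ 1 := by norm_num
      _ ≤ 2 ^ t := by
        apply pow_le_pow_right₀ <;> [norm_num; omega]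
    linarith
  intro r hr
  induction r, hr using Nat.le_induction with
  | base =>
      have e0 : (PP t 1).1 = qP ^ t := rfl
      have e1 : (PP t 1).2 = 1 - (1 - qP) ^ t := rfl
      have hEv0 : Ev (PP t 1).1 = ((1 : ℝ) / 2) ^ t := by
        rw [e0, Ev_pow, Ev_qP]
      have hEv1 : Ev (PP t 1).2 = 1 - ((1 : ℝ) / 2) ^ t := by
        rw [e1]
        have : Ev (1 - (1 - qP) ^ t) = Ev 1 - Ev ((1 - qP) ^ t) := by
          simp [Ev]
        rw [this, Ev_pow]
        have : Ev (1 - qP) = 1 / 2 := by simp [Ev, qP]; norm_num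
        rw [this]
        simp [Ev]
      have hDv0 : Dv (PP t 1).1 = -(((s : ℝ) + 1) * ((1 : ℝ) / 2) ^ s / 2) := by
        rw [e0, Dv_pow, Ev_qP, Dv_qP, ht, Nat.add_sub_cancel]
        push_cast
        ring
      have hDv1 : Dv (PP t 1).2 = -(((s : ℝ) + 1) * ((1 : ℝ) / 2) ^ s / 2) := by
        rw [e1]
        have hd : Dv (1 - (1 - qP) ^ t) = -Dv ((1 - qP) ^ t) := by
          simp [Dv]
        rw [hd, Dv_pow]
        have hev : Ev (1 - qP) = 1 / 2 := by simp [Ev, qP]; norm_num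
        have hdv : Dv (1 - qP) = 1 / 2 := by simp [Dv, qP]
        rw [hev, hdv, ht, Nat.add_sub_cancel]
        push_cast
        ring
      refine ⟨⟨by rw [hEv0, hEv1]; ring, by rw [hEv0]; positivity, ?_⟩, ?_⟩
      · rw [hEv1]; linarith
      · rw [hDv0, hDv1]
        have h2 : (0 : ℝ) ≤ ((s : ℝ) + 1) * ((1 : ℝ) / 2) ^ s := by positivity
        refine ⟨by linarith, by linarith, by linarith, by linarith⟩
  | succ m hm ih =>
      obtain ⟨m, rfl⟩ : ∃ k, m = k + 1 := ⟨m - 1, by omega⟩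
      obtain ⟨⟨hsum, ha0, hb0⟩, hv, hv0, hu, hu0⟩ := ih
      set V := (PP t (m + 1)).1 with hV
      set U := (PP t (m + 1)).2 with hU
      have ha1 : Ev V ≤ 1 := by linarith
      have hb1 : Ev U ≤ 1 := by linarith
      have e0 : (PP t (m + 1 + 1)).1
          = qP * U * (∑ k ∈ range t, (qP + Polynomial.X * U) ^ k)
            + (qP + Polynomial.X * U) ^ t := by
        rw [hU]; simp only [PP]
      have e1 : (PP t (m + 1 + 1)).2
          = qP * V * (∑ k ∈ range t, (qP + Polynomial.X * V) ^ k) := by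
        rw [hV]; simp only [PP]
      have hEv0 : Ev (PP t (m + 1 + 1)).1
          = 1 / 2 * Ev U * (2 - 2 * ((1 : ℝ) / 2) ^ t) + ((1 : ℝ) / 2) ^ t := by
        rw [e0, Ev_add, step_Ev1, step_Ev0pow]
      have hEv1 : Ev (PP t (m + 1 + 1)).2
          = 1 / 2 * Ev V * (2 - 2 * ((1 : ℝ) / 2) ^ t) := by
        rw [e1, step_Ev1]
      have hDv0 : Dv (PP t (m + 1 + 1)).1
          = (-(Ev U) / 2 + Dv U / 2) * (2 - 2 * ((1 : ℝ) / 2) ^ t)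
            + Ev U / 2 * (4 - 4 * ((t : ℝ) + 1) * ((1 : ℝ) / 2) ^ t) * (Ev U - 1 / 2)
            + 2 * (t : ℝ) * ((1 : ℝ) / 2) ^ t * (Ev U - 1 / 2) := by
        rw [e0, Dv_add, step_Dv1, step_Dv0pow]
        rw [ht, pow_succ]
        push_cast
        ring
      have hDv1 : Dv (PP t (m + 1 + 1)).2
          = (-(Ev V) / 2 + Dv V / 2) * (2 - 2 * ((1 : ℝ) / 2) ^ t)
            + Ev V / 2 * (4 - 4 * ((t : ℝ) + 1) * ((1 : ℝ) / 2) ^ t) * (Ev V - 1 / 2) := by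
        rw [e1, step_Dv1]
      have hT : (0 : ℝ) ≤ (t : ℝ) := by positivity
      have k0 := key0 (t : ℝ) (((1 : ℝ) / 2) ^ t) (2 * (2 : ℝ) ^ t) (Ev U) (Dv U)
        hE hE2 hT hTE hBE hb0 hb1 hu0 hu
      have k1 := key1 (t : ℝ) (((1 : ℝ) / 2) ^ t) (2 * (2 : ℝ) ^ t) (Ev V) (Dv V)
        hE hE2 hT hTE hBE ha0 ha1 hv0 hv
      refine ⟨⟨?_, ?_, ?_⟩, ?_, ?_, ?_, ?_⟩
      · rw [hEv0, hEv1]; nlinarith [hsum]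
      · rw [hEv0]; nlinarith [hb0, hb1, hE.le, hE2]
      · rw [hEv1]; nlinarith [ha0, ha1, hE.le, hE2]
      · rw [hDv0]; exact k0.1
      · rw [hDv0]; exact k0.2
      · rw [hDv1]; exact k1.1
      · rw [hDv1]; exact k1.2

end PpolyAux

/-- for every `r ≥ 1`, `−2·2^t ≤ [p]P_0(r) ≤ 0` and
`−2·2^t ≤ [p]P_1(r) ≤ 0`. -/
theorem ppoly_linear_coeff_bounds (t : ℕ) (ht : 1 ≤ t) (r : ℕ) (hr : 1 ≤ r) :
    (-2 * 2 ^ t ≤ (P0poly t r).coeff 1 ∧ (P0poly t r).coeff 1 ≤ 0) ∧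
      (-2 * 2 ^ t ≤ (P1poly t r).coeff 1 ∧ (P1poly t r).coeff 1 ≤ 0) := by
  obtain ⟨s, rfl⟩ : ∃ s, t = s + 1 := ⟨t - 1, by omega⟩
  obtain ⟨⟨_, _, _⟩, h1, h2, h3, h4⟩ := PpolyAux.main s r hr
  rw [P0poly, P1poly, PpolyAux.coeff_one_eq_Dv, PpolyAux.coeff_one_eq_Dv]
  refine ⟨⟨by linarith, h2⟩, by linarith, h4⟩
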